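/- arXiv:2203.14292 — 3 statements merged into one kernel-verified Lean document; each statement's English description precedes it below -/
import Mathlib

section
/- Let I⁰ and the filtration ⟨I⁰_α : α < κ⟩ as above (I⁰_γ = {ν : ∀n, ν₁(n) < γ}). For every limit ordinal δ < κ and every ν ∈ I⁰ with ν ∉ I⁰_δ, there exists β < δ such that for all σ ∈ I⁰_δ with σ > ν there exists σ' ∈ I⁰_β with σ > σ' > ν. -/
def I0 (κ : Cardinal) : Set (ℕ → Ordinal × ℚ) :=
  {f | (∀ n, (f n).1 < κ.ord) ∧ {n | (f n).1 ≠ 0}.Finite}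

def I0lt (f g : ℕ → Ordinal × ℚ) : Prop :=
  ∃ n : ℕ, (∀ m, m < n → f m = g m) ∧
    ((f n).1 < (g n).1 ∨ ((f n).1 = (g n).1 ∧ (f n).2 < (g n).2))

def I0filt (κ : Cardinal) (γ : Ordinal) : Set (ℕ → Ordinal × ℚ) :=
  {f | f ∈ I0 κ ∧ ∀ n, (f n).1 < γ}

/-- for every limit `δ < κ` and every `ν ∈ I⁰` with `ν ∉ I⁰_δ`,
there is `β < δ` such that every `σ ∈ I⁰_δ` with `σ > ν` admits `σ' ∈ I⁰_β`
with `σ > σ' > ν`. -/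
theorem I0_density_lemma (κ : Cardinal) (hreg : κ.IsRegular)
    (hunc : Cardinal.aleph0 < κ) :
    ∀ δ : Ordinal, δ < κ.ord → Order.IsSuccLimit δ →
      ∀ ν ∈ I0 κ, ν ∉ I0filt κ δ →
        ∃ β < δ, ∀ σ ∈ I0filt κ δ, I0lt ν σ →
          ∃ σ' ∈ I0filt κ β, I0lt σ' σ ∧ I0lt ν σ' := by
  intro δ hδκ hδlim ν hν _hνδ
  obtain ⟨hνκ, hνfin⟩ := hν
  set s : Ordinal := hνfin.toFinset.sup (fun m => if (ν m).1 < δ then (ν m).1 else 0)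
    with hs
  have hsδ : s < δ := by
    rw [hs]
    refine (Finset.sup_lt_iff hδlim.pos).2 ?_
    intro m _
    split
    · assumption
    · exact hδlim.pos
  have hbδ : s + 1 < δ := by
    rw [Ordinal.add_one_eq_succ]
    exact hδlim.succ_lt hsδ
  have hbpos : (0 : Ordinal) < s + 1 := by
    rw [Ordinal.add_one_eq_succ]
    exact lt_of_le_of_lt zero_le (Order.lt_succ _)
  have hbkey : ∀ m, (ν m).1 < δ → (ν m).1 < s + 1 := by
    intro m hm
    rcases eq_or_ne (ν m).1 0 with h0 | h0
    · rw [h0]; exact hbpos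
    · have hmem : m ∈ hνfin.toFinset := by simpa using h0
      have hle : (ν m).1 ≤ s := by
        simpa [hm] using Finset.le_sup (f := fun m => if (ν m).1 < δ then (ν m).1 else 0) hmem
      calc (ν m).1 ≤ s := hle
        _ < s + 1 := by
          rw [Ordinal.add_one_eq_succ]; exact Order.lt_succ _
  refine ⟨s + 1, hbδ, ?_⟩
  intro σ hσ hνσ
  obtain ⟨⟨hσκ, _⟩, hσδ⟩ := hσ
  obtain ⟨n, heq, hcase⟩ := hνσ
  have hνnδ : (ν n).1 < δ := by
    rcases hcase with h | ⟨h, _⟩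
    · exact h.trans (hσδ n)
    · rw [h]; exact hσδ n
  obtain ⟨q, hq1, hq2⟩ : ∃ q : ℚ, (ν n).2 < q ∧ ((ν n).1 = (σ n).1 → q < (σ n).2) := by
    rcases hcase with h | ⟨h, h2⟩
    · exact ⟨(ν n).2 + 1, by linarith, fun he => absurd (he ▸ h) (lt_irrefl _)⟩
    · obtain ⟨q, hq1, hq2⟩ := exists_between h2
      exact ⟨q, hq1, fun _ => hq2⟩
  set σ' : ℕ → Ordinal × ℚ :=
    fun m => if m < n then ν m else if m = n then ((ν n).1, q) else (0, 0) with hσ'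
  have hσ'eq : ∀ m, m < n → σ' m = ν m := fun m hm => if_pos hm
  have hσ'n : σ' n = ((ν n).1, q) := by
    simp [hσ']
  have hσ'big : ∀ m, n < m → σ' m = (0, 0) := by
    intro m hm
    simp only [hσ']
    rw [if_neg (Nat.lt_asymm hm), if_neg hm.ne']
  refine ⟨σ', ⟨⟨?_, ?_⟩, ?_⟩, ⟨n, ?_, ?_⟩, ⟨n, ?_, ?_⟩⟩
  · -- coords < κ.ord
    intro m
    rcases lt_trichotomy m n with hm | hm | hm
    · rw [hσ'eq m hm]; exact hνκ m
    · subst hm; rw [hσ'n]; exact hνκ m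
    · rw [hσ'big m hm]; exact zero_le.trans_lt (hσκ m)
  · -- finiteness
    refine hνfin.subset ?_
    intro m hm
    simp only [Set.mem_setOf_eq] at hm ⊢
    rcases lt_trichotomy m n with h | h | h
    · rw [hσ'eq m h] at hm; exact hm
    · subst h; rw [hσ'n] at hm; exact hm
    · rw [hσ'big m h] at hm; simp at hm
  · -- coords < s + 1
    intro m
    rcases lt_trichotomy m n with h | h | h
    · rw [hσ'eq m h]
      have : (ν m).1 < δ := by rw [heq m h]; exact hσδ m
      exact hbkey m this
    · subst h; rw [hσ'n]; exact hbkey m hνnδ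
    · rw [hσ'big m h]; exact hbpos
  · -- σ' agrees with σ below n
    intro m hm
    rw [hσ'eq m hm, heq m hm]
  · -- σ' < σ at n
    rw [hσ'n]
    rcases hcase with h | ⟨h, _⟩
    · exact Or.inl h
    · exact Or.inr ⟨h, hq2 h⟩
  · -- ν agrees with σ' below n
    intro m hm
    rw [hσ'eq m hm]
  · -- ν < σ' at n
    rw [hσ'n]
    exact Or.inr ⟨rfl, hq1⟩
end

section
/- Let I⁰ and ⟨I⁰_α⟩ be as above. For every limit ordinal δ < κ and every ν ∈ I⁰ there exists β < δ such that for all σ ∈ I⁰_δ, if σ > ν then there exists σ' ∈ I⁰_β with σ ≥ σ' ≥ ν. -/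
/-- The reflexive closure `f ≤ g` of the comparison on `I⁰`. -/
def I0le (f g : ℕ → Ordinal × ℚ) : Prop := I0lt f g ∨ f = g

/-- for every limit `δ < κ` and every `ν ∈ I⁰` there is `β < δ`
such that every `σ ∈ I⁰_δ` with `σ > ν` admits `σ' ∈ I⁰_β` with `σ ≥ σ' ≥ ν`. -/
theorem I0_niceness_lemma (κ : Cardinal) (hreg : κ.IsRegular)
    (hunc : Cardinal.aleph0 < κ) :
    ∀ δ : Ordinal, δ < κ.ord → Order.IsSuccLimit δ →
      ∀ ν ∈ I0 κ,
        ∃ β < δ, ∀ σ ∈ I0filt κ δ, I0lt ν σ →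
          ∃ σ' ∈ I0filt κ β, I0le σ' σ ∧ I0le ν σ' := by
  classical
  intro δ hδκ hδlim ν hν
  obtain ⟨hνκ, hνfin⟩ := hν
  have h0δ : (⊥ : Ordinal) < δ := hδlim.bot_lt
  have hsucc : ∀ a : Ordinal, a < δ → a + 1 < δ := by
    intro a ha
    rw [Ordinal.add_one_eq_succ]
    exact hδlim.succ_lt ha
  by_cases hcase : ∀ n, (ν n).1 < δ
  · -- ν ∈ I⁰_δ : take β bounding all entries of ν, σ' = ν
    refine ⟨(hνfin.toFinset.sup fun m => (ν m).1 + 1) ⊔ 1, ?_, ?_⟩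
    · refine max_lt ?_ (Ordinal.one_lt_of_isSuccLimit hδlim)
      rw [Finset.sup_lt_iff h0δ]
      exact fun m _ => hsucc _ (hcase m)
    · intro σ hσ hlt
      refine ⟨ν, ⟨⟨hνκ, hνfin⟩, ?_⟩, Or.inl hlt, Or.inr rfl⟩
      intro n
      by_cases hn : (ν n).1 = 0
      · rw [hn]
        exact lt_of_lt_of_le one_pos (le_max_right _ _)
      · refine lt_of_lt_of_le ?_ (le_max_left _ _)
        refine lt_of_lt_of_le (lt_add_one _) (Finset.le_sup (f := fun m => (ν m).1 + 1) ?_)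
        simpa using hn
  · push_neg at hcase
    -- n₀ : least n with (ν n).1 ≥ δ
    let n₀ := Nat.find hcase
    have hn₀ : δ ≤ (ν n₀).1 := Nat.find_spec hcase
    have hlt_n₀ : ∀ m, m < n₀ → (ν m).1 < δ := by
      intro m hm
      have := Nat.find_min hcase hm
      exact lt_of_not_ge this
    refine ⟨((Finset.range n₀).sup fun m => (ν m).1 + 1) ⊔ 1, ?_, ?_⟩
    · refine max_lt ?_ (Ordinal.one_lt_of_isSuccLimit hδlim)
      rw [Finset.sup_lt_iff h0δ]
      intro m hm
      exact hsucc _ (hlt_n₀ m (Finset.mem_range.mp hm))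
    · intro σ ⟨⟨hσκ, hσfin⟩, hσδ⟩ hlt
      obtain ⟨k, hagree, hk⟩ := hlt
      have hkn₀ : k < n₀ := by
        by_contra hkc
        push_neg at hkc
        rcases eq_or_lt_of_le hkc with heq | hlt'
        · -- n₀ = k
          rw [heq] at hn₀
          have hσk := hσδ k
          rcases hk with h | ⟨h, _⟩
          · exact absurd (lt_trans (lt_of_le_of_lt hn₀ h) hσk) (lt_irrefl _)
          · rw [h] at hn₀; exact absurd (lt_of_le_of_lt hn₀ hσk) (lt_irrefl _)
        · have := hagree n₀ hlt'
          have hσn := hσδ n₀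
          rw [← this] at hσn
          exact absurd (lt_of_le_of_lt hn₀ hσn) (lt_irrefl _)
      -- define σ'
      set p : Ordinal × ℚ :=
        if (ν k).1 < (σ k).1 then ((ν k).1, (ν k).2 + 1)
        else ((ν k).1, ((ν k).2 + (σ k).2) / 2) with hp
      set σ' : ℕ → Ordinal × ℚ :=
        fun m => if m < k then ν m else if m = k then p else (0, 0) with hσ'
      have hσ'lt : ∀ m, m < k → σ' m = ν m := by
        intro m hm; simp [hσ', hm]
      have hσ'k : σ' k = p := by simp [hσ']
      have hσ'gt : ∀ m, k < m → σ' m = (0, 0) := by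
        intro m hm
        simp [hσ', Nat.lt_asymm hm, Nat.ne_of_gt hm]
      have hp1 : p.1 = (ν k).1 := by
        rw [hp]; split <;> rfl
      -- facts about second coordinate
      have hpν : (ν k).2 < p.2 ∧ (p.1 < (σ k).1 ∨ (p.1 = (σ k).1 ∧ p.2 < (σ k).2)) := by
        by_cases hfc : (ν k).1 < (σ k).1
        · rw [hp, if_pos hfc]
          exact ⟨lt_add_one _, Or.inl hfc⟩
        · rcases hk with h | ⟨h1, h2⟩
          · exact absurd h hfc
          · rw [hp, if_neg hfc]
            refine ⟨by linarith, Or.inr ⟨h1, by dsimp only; linarith⟩⟩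
      refine ⟨σ', ⟨⟨?_, ?_⟩, ?_⟩, ?_, ?_⟩
      · -- σ' ∈ I0 κ : first coords < κ.ord
        intro n
        rcases lt_trichotomy n k with h | h | h
        · rw [hσ'lt n h]; exact hνκ n
        · subst h; rw [hσ'k, hp1]; exact hνκ n
        · rw [hσ'gt n h]
          exact lt_of_lt_of_le (lt_of_le_of_lt (zero_le (a := δ)) hδκ) le_rfl
      · -- finite support
        apply Set.Finite.subset (Set.finite_le_nat k)
        intro n hn
        by_contra hc
        simp only [Set.mem_setOf_eq, not_le] at hc
        simp only [Set.mem_setOf_eq, hσ'gt n hc] at hn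
        exact hn rfl
      · -- σ' ∈ I0filt β
        intro n
        rcases lt_trichotomy n k with h | h | h
        · rw [hσ'lt n h]
          refine lt_of_lt_of_le ?_ (le_max_left _ _)
          exact lt_of_lt_of_le (lt_add_one _)
            (Finset.le_sup (f := fun m => (ν m).1 + 1) (Finset.mem_range.mpr (lt_trans h hkn₀)))
        · subst h
          rw [hσ'k, hp1]
          refine lt_of_lt_of_le ?_ (le_max_left _ _)
          exact lt_of_lt_of_le (lt_add_one _)
            (Finset.le_sup (f := fun m => (ν m).1 + 1) (Finset.mem_range.mpr hkn₀))
        · rw [hσ'gt n h]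
          exact lt_of_lt_of_le one_pos (le_max_right _ _)
      · -- σ' ≤ σ
        refine Or.inl ⟨k, ?_, ?_⟩
        · intro m hm; rw [hσ'lt m hm]; exact hagree m hm
        · rw [hσ'k]; exact hpν.2
      · -- ν ≤ σ'
        refine Or.inl ⟨k, ?_, ?_⟩
        · intro m hm; rw [hσ'lt m hm]
        · rw [hσ'k, hp1]
          exact Or.inr ⟨rfl, hpν.1⟩
end

section
/- Fix a limit ordinal δ and ν, σ ∈ I⁰ with σ ∈ I⁰_δ, σ > ν, and suppose n is the least index where σ and ν differ and σ₁(n) = ν₁(n) (equal κ-coordinates but σ₂(n) > ν₂(n)). Let β < δ bound all values ν₁(m) that are < δ. Then the function σ' defined by σ'(m) = ν(m) for m < n, σ'(n) = (ν₁(n), r) for any rational r with ν₂(n) < r < σ₂(n), and σ'(m) = (0,0) for m > n, lies in I⁰_β and satisfies σ > σ' > ν. -/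
/-- the explicit interpolant in Case 1 of Lemma `first_order_result`.
If `σ ∈ I⁰_δ`, `σ > ν` with least difference at `n`, equal first coordinates at `n`,
`β < δ` bounds all values `ν₁(m)` that are `< δ`, and `ν₂(n) < r < σ₂(n)`,
then `σ'` (copying `ν` below `n`, taking `(ν₁(n), r)` at `n` and `(0,0)` above)
lies in `I⁰_β` and `σ > σ' > ν`. -/
theorem I0_interpolant (κ : Cardinal) (hreg : κ.IsRegular)
    (hunc : Cardinal.aleph0 < κ)
    (δ : Ordinal) (hδκ : δ < κ.ord) (hδ : Order.IsSuccLimit δ)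
    (ν σ : ℕ → Ordinal × ℚ) (hν : ν ∈ I0 κ) (hσ : σ ∈ I0filt κ δ)
    (hνσ : I0lt ν σ)
    (n : ℕ) (hagree : ∀ m, m < n → σ m = ν m) (hdiff : σ n ≠ ν n)
    (heq1 : (σ n).1 = (ν n).1) (hlt2 : (ν n).2 < (σ n).2)
    (β : Ordinal) (hβδ : β < δ)
    (hβ : ∀ m : ℕ, (ν m).1 < δ → (ν m).1 < β)
    (r : ℚ) (hr1 : (ν n).2 < r) (hr2 : r < (σ n).2)
    (σ' : ℕ → Ordinal × ℚ)
    (hσ' : ∀ m : ℕ, σ' m =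
      if m < n then ν m else if m = n then ((ν n).1, r) else ((0 : Ordinal), (0 : ℚ))) :
    σ' ∈ I0filt κ β ∧ I0lt σ' σ ∧ I0lt ν σ' := by
  have hσ'n : σ' n = ((ν n).1, r) := by
    rw [hσ' n]; simp
  have hσ'lt : ∀ m, m < n → σ' m = ν m := by
    intro m hm; rw [hσ' m, if_pos hm]
  have hσ'gt : ∀ m, n < m → σ' m = ((0 : Ordinal), (0 : ℚ)) := by
    intro m hm
    rw [hσ' m, if_neg (by omega), if_neg (by omega)]
  -- ν n .1 < β
  have hνnδ : (ν n).1 < δ := heq1 ▸ hσ.2 n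
  have hνnβ : (ν n).1 < β := hβ n hνnδ
  have hβpos : 0 < β := lt_of_le_of_lt zero_le hνnβ
  refine ⟨⟨⟨fun m => ?_, ?_⟩, fun m => ?_⟩, ?_, ?_⟩
  · -- < κ.ord
    rcases lt_trichotomy m n with h | h | h
    · rw [hσ'lt m h]; exact hν.1 m
    · subst h; rw [hσ'n]; exact hν.1 m
    · rw [hσ'gt m h]; exact lt_of_le_of_lt zero_le (lt_trans hβδ hδκ)
  · -- finite support
    apply Set.Finite.subset (Set.finite_Icc 0 n)
    intro m hm
    simp only [Set.mem_setOf_eq] at hm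
    by_contra hc
    simp only [Set.mem_Icc] at hc
    exact hm (by rw [hσ'gt m (by omega)])
  · -- < β
    rcases lt_trichotomy m n with h | h | h
    · rw [hσ'lt m h]
      have := hagree m h ▸ hσ.2 m
      exact hβ m (by rw [← hagree m h]; exact hσ.2 m)
    · subst h; rw [hσ'n]; exact hνnβ
    · rw [hσ'gt m h]; exact hβpos
  · -- σ' < σ
    refine ⟨n, fun m hm => by rw [hσ'lt m hm, ← hagree m hm], Or.inr ?_⟩
    rw [hσ'n]; exact ⟨heq1.symm, hr2⟩
  · -- ν < σ'
    refine ⟨n, fun m hm => (hσ'lt m hm).symm, Or.inr ?_⟩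
    rw [hσ'n]; exact ⟨rfl, hr1⟩
end
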